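/- arXiv:1903.01291 — 3 statements merged into one kernel-verified Lean document; each statement's English description precedes it below -/
import Mathlib

section
/- Let B be a simple bipartite graph with vertex bipartition V(B) = W ⊎ U, let G be the half-square of B, and let D = (T, β_D) be a rooted tree decomposition of B. Define β_{D'}(t) = (β_D(t) ∩ W) ∪ ⋃_{s ∈ β_D(t) ∩ U} (N_B(s) ∩ γ_D(t)) for every node t of T, where γ_D(t) is the union of the bags β_D(t') over t and all descendants t' of t. Then D' = (T, β_{D'}) is a tree decomposition of G. -/
open SimpleGraph

section Defs

variable {V : Type*} {ι : Type*}

/-- `W, U` is a bipartition of the simple graph `B`. -/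
def IsBipartition (B : SimpleGraph V) (W U : Set V) : Prop :=
  (∀ v, v ∈ W ∨ v ∈ U) ∧ (∀ v, ¬(v ∈ W ∧ v ∈ U)) ∧
    ∀ ⦃a b⦄, B.Adj a b → (a ∈ W ∧ b ∈ U) ∨ (a ∈ U ∧ b ∈ W)

/-- The half-square of `B` on side `W`: two distinct vertices of `W` are adjacent
iff they have a common neighbor in `B`. -/
def halfSquare (B : SimpleGraph V) (W : Set V) : SimpleGraph V where
  Adj a b := a ≠ b ∧ a ∈ W ∧ b ∈ W ∧ ∃ s, B.Adj a s ∧ B.Adj b s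
  symm := by
    constructor
    rintro a b ⟨hne, ha, hb, s, h1, h2⟩
    exact ⟨hne.symm, hb, ha, s, h2, h1⟩
  loopless := by constructor; rintro a ⟨hne, _⟩; exact hne rfl

/-- Tree decomposition of the graph `H` with vertex set `S`, over the tree `T`. -/
structure IsTreeDecompOn (H : SimpleGraph V) (S : Set V) (T : SimpleGraph ι)
    (β : ι → Set V) : Prop where
  covers : ∀ v ∈ S, ∃ t, v ∈ β t
  edge_mem : ∀ ⦃u v⦄, H.Adj u v → ∃ t, u ∈ β t ∧ v ∈ β t
  conn : ∀ v ∈ S, (T.induce {t | v ∈ β t}).Connected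

/-- `t'` is a descendant of `t` (inclusively) in the tree `T` rooted at `r`:
`t` lies on every path from `t'` to the root. -/
def Desc (T : SimpleGraph ι) (r : ι) (t t' : ι) : Prop :=
  ∀ p : T.Walk t' r, p.IsPath → t ∈ p.support

/-- `γ(t)`: union of the bags of `t` and of all its descendants. -/
def gammaSet (T : SimpleGraph ι) (r : ι) (β : ι → Set V) (t : ι) : Set V :=
  ⋃ t' ∈ {t' | Desc T r t t'}, β t'

/-- The bag of the derived decomposition. -/
def derivedBag (B : SimpleGraph V) (W U : Set V) (T : SimpleGraph ι) (r : ι)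
    (β : ι → Set V) (t : ι) : Set V :=
  (β t ∩ W) ∪ ⋃ s ∈ β t ∩ U, B.neighborSet s ∩ gammaSet T r β t

def originalSet (B : SimpleGraph V) (W U : Set V) (T : SimpleGraph ι) (r : ι)
    (β : ι → Set V) (t : ι) : Set V :=
  β t ∩ derivedBag B W U T r β t

def fakeSet (B : SimpleGraph V) (W U : Set V) (T : SimpleGraph ι) (r : ι)
    (β : ι → Set V) (t : ι) : Set V :=
  derivedBag B W U T r β t \ β t

def cliquesAt (B : SimpleGraph V) (U : Set V) (β : ι → Set V) (t : ι) : Set (Set V) :=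
  {K | ∃ s ∈ β t ∩ U, K = B.neighborSet s}

def IsChild (T : SimpleGraph ι) (r : ι) (t t' : ι) : Prop :=
  T.Adj t t' ∧ Desc T r t t'

def IsLeafNode (T : SimpleGraph ι) (r : ι) (β : ι → Set V) (t : ι) : Prop :=
  (∀ t', ¬ IsChild T r t t') ∧ β t = ∅

def IsForgetNode (T : SimpleGraph ι) (r : ι) (β : ι → Set V) (w : V) (t : ι) : Prop :=
  ∃ t', IsChild T r t t' ∧ (∀ t'', IsChild T r t t'' → t'' = t') ∧
    w ∈ β t' ∧ β t = β t' \ {w}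

def IsIntroduceNode (T : SimpleGraph ι) (r : ι) (β : ι → Set V) (w : V) (t : ι) : Prop :=
  ∃ t', IsChild T r t t' ∧ (∀ t'', IsChild T r t t'' → t'' = t') ∧
    w ∈ β t ∧ β t \ {w} = β t'

def IsJoinNode (T : SimpleGraph ι) (r : ι) (β : ι → Set V) (t : ι) : Prop :=
  ∃ t₁ t₂, t₁ ≠ t₂ ∧ IsChild T r t t₁ ∧ IsChild T r t t₂ ∧
    (∀ t'', IsChild T r t t'' → t'' = t₁ ∨ t'' = t₂) ∧ β t = β t₁ ∧ β t = β t₂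

/-- A nice (rooted) tree decomposition. -/
def IsNice (T : SimpleGraph ι) (r : ι) (β : ι → Set V) : Prop :=
  β r = ∅ ∧ ∀ t, IsLeafNode T r β t ∨ (∃ w, IsForgetNode T r β w t) ∨
    (∃ w, IsIntroduceNode T r β w t) ∨ IsJoinNode T r β t

/-- `E(X)`: edges of `G` with both endpoints in `X`. -/
def edgesIn (G : SimpleGraph V) (X : Set V) : Set (Sym2 V) :=
  {e | e ∈ G.edgeSet ∧ ∀ x ∈ e, x ∈ X}

end Defs

section Helpers

variable {V : Type*} {ι : Type*} {T : SimpleGraph ι} {r : ι}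

lemma path_unique (hT : T.IsTree) {a b : ι} {p q : T.Walk a b}
    (hp : p.IsPath) (hq : q.IsPath) : p = q :=
  (hT.existsUnique_path a b).unique hp hq

lemma desc_iff (hT : T.IsTree) {t t' : ι} {p : T.Walk t' r} (hp : p.IsPath) :
    Desc T r t t' ↔ t ∈ p.support := by
  constructor
  · exact fun h => h p hp
  · intro h q hq
    rwa [path_unique hT hq hp]

lemma desc_refl (t : ι) : Desc T r t t := fun p _ => p.start_mem_support

lemma desc_trans {u t t' : ι} (h1 : Desc T r u t) (h2 : Desc T r t t') :
    Desc T r u t' := by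
  classical
  intro p hp
  have ht : t ∈ p.support := h2 p hp
  have := h1 (p.dropUntil t ht) (hp.dropUntil ht)
  exact p.support_dropUntil_subset ht this

lemma gamma_mono {β : ι → Set V} {u t : ι} (h : Desc T r u t) :
    gammaSet T r β t ⊆ gammaSet T r β u := by
  intro v hv
  simp only [gammaSet, Set.mem_iUnion, Set.mem_setOf_eq] at hv ⊢
  obtain ⟨t'', hd, hv⟩ := hv
  exact ⟨t'', desc_trans h hd, hv⟩

lemma mem_gamma_of_desc {β : ι → Set V} {u t : ι} {v : V} (h : Desc T r u t)
    (hv : v ∈ β t) : v ∈ gammaSet T r β u := by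
  simp only [gammaSet, Set.mem_iUnion, Set.mem_setOf_eq]
  exact ⟨t, h, hv⟩

lemma exists_walk_of_induce_reachable {S : Set ι} {a b : ι} {ha : a ∈ S} {hb : b ∈ S}
    (h : (T.induce S).Reachable ⟨a, ha⟩ ⟨b, hb⟩) :
    ∃ p : T.Walk a b, ∀ x ∈ p.support, x ∈ S := by
  obtain ⟨w⟩ := h
  refine ⟨w.map (SimpleGraph.Embedding.induce S).toHom, ?_⟩
  intro x hx
  replace hx : x ∈ w.support.map (SimpleGraph.Embedding.induce (G := T) S).toHom := by
    rw [← Walk.support_map]; exact hx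
  rw [List.mem_map] at hx
  obtain ⟨y, _, rfl⟩ := hx
  exact y.2

lemma reachable_induce_of_walk {S : Set ι} {a b : ι} (p : T.Walk a b)
    (hp : ∀ x ∈ p.support, x ∈ S) : ∀ (ha : a ∈ S) (hb : b ∈ S),
    (T.induce S).Reachable ⟨a, ha⟩ ⟨b, hb⟩ := by
  induction p with
  | nil => exact fun _ _ => Reachable.refl _
  | @cons u c d h q ih =>
    intro ha hb
    have hc : c ∈ S := hp c (by simp)
    have hq : ∀ x ∈ q.support, x ∈ S := fun x hx => hp x (by simp [hx])
    have hadj : (T.induce S).Adj ⟨u, ha⟩ ⟨c, hc⟩ := h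
    exact hadj.reachable.trans (ih hq hc hb)

lemma support_subset_of_tree (hT : T.IsTree) {a b : ι}
    (pa : T.Walk a r) (pb : T.Walk b r)
    {q : T.Walk a b} (hq : q.IsPath) :
    ∀ u ∈ q.support, u ∈ pa.support ∨ u ∈ pb.support := by
  classical
  intro u hu
  have hw : q = (pa.append pb.reverse).bypass :=
    path_unique hT hq (pa.append pb.reverse).bypass_isPath
  rw [hw] at hu
  have := (pa.append pb.reverse).support_bypass_subset hu
  rw [Walk.mem_support_append_iff] at this
  rcases this with h | h
  · exact Or.inl h
  · right
    rw [Walk.support_reverse, List.mem_reverse] at h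
    exact h

lemma exists_top (hT : T.IsTree) {S : Set ι} (hconn : (T.induce S).Connected)
    (hne : S.Nonempty) : ∃ t ∈ S, ∀ t' ∈ S, Desc T r t t' := by
  classical
  have P : ∀ x : ι, ∃ p : T.Walk x r, p.IsPath := fun x => (hT.existsUnique_path x r).exists
  choose P hP using P
  have hNe : (Set.image (fun t => (P t).length) S).Nonempty := hne.image _
  set n := sInf (Set.image (fun t => (P t).length) S) with hn
  have hmem := Nat.sInf_mem hNe
  rw [← hn] at hmem
  obtain ⟨t, htS, htlen⟩ := hmem
  refine ⟨t, htS, ?_⟩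
  have hmin : ∀ u ∈ S, (P t).length ≤ (P u).length := by
    intro u hu
    have h1 : (P t).length = n := htlen
    have h2 : n ≤ (P u).length := Nat.sInf_le ⟨u, hu, rfl⟩
    omega
  have key : ∀ u ∈ S, u ∈ (P t).support → u = t := by
    intro u hu hmem
    have hPu : P u = (P t).dropUntil u hmem :=
      path_unique hT (hP u) ((hP t).dropUntil hmem)
    have hlen : ((P t).takeUntil u hmem).length + ((P t).dropUntil u hmem).length
        = (P t).length := by
      conv_rhs => rw [← (P t).take_spec hmem]
      rw [Walk.length_append]
    have h1 : (P t).length ≤ ((P t).dropUntil u hmem).length := by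
      rw [← hPu]; exact hmin u hu
    have h0 : ((P t).takeUntil u hmem).length = 0 := by omega
    exact (Walk.eq_of_length_eq_zero h0).symm
  intro t' ht'S
  by_cases hEq : t' = t
  · subst hEq; exact desc_refl _
  rw [desc_iff hT (hP t')]
  obtain ⟨w, hwS⟩ := exists_walk_of_induce_reachable
    (hconn.preconnected ⟨t', ht'S⟩ ⟨t, htS⟩)
  have hq : w.bypass.IsPath := w.bypass_isPath
  have hqS : ∀ x ∈ w.bypass.support, x ∈ S := fun x hx => hwS x (w.support_bypass_subset hx)
  have hner : w.bypass.reverse.IsPath := hq.reverse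
  obtain ⟨u, hadj, w', hcons⟩ := Walk.exists_eq_cons_of_ne (Ne.symm hEq) w.bypass.reverse
  have huS : u ∈ S := by
    have : u ∈ w.bypass.reverse.support := by rw [hcons]; simp
    rw [Walk.support_reverse, List.mem_reverse] at this
    exact hqS u this
  have hunt : u ≠ t := by
    rw [hcons] at hner
    have := hner.2
    simp only [Walk.support_cons, List.nodup_cons] at this
    intro h; subst h
    exact this.1 w'.start_mem_support
  have huPt' : u ∈ (P t').support := by
    have huq : u ∈ w.bypass.support := by
      rw [← List.mem_reverse, ← Walk.support_reverse, hcons]; simp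
    rcases support_subset_of_tree hT (P t') (P t) hq u huq with h | h
    · exact h
    · exact absurd (key u huS h) hunt
  have hPu : P u = (P t').dropUntil u huPt' :=
    path_unique hT (hP u) ((hP t').dropUntil huPt')
  have htPu : t ∈ (P u).support := by
    by_contra hc
    have hpath : (Walk.cons hadj (P u)).IsPath := (hP u).cons hc
    have : P t = Walk.cons hadj (P u) := path_unique hT (hP t) hpath
    have hlen := hmin u huS
    rw [this, Walk.length_cons] at hlen
    omega
  rw [hPu] at htPu
  exact (P t').support_dropUntil_subset huPt' htPu

end Helpers


/-- the derived decomposition `D'` is a tree decomposition of the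
half-square `G` of `B` (whose vertex set is `W`). -/
theorem stmt_0 {V : Type*} {ι : Type*} (B : SimpleGraph V) (W U : Set V)
    (hbip : IsBipartition B W U)
    (T : SimpleGraph ι) (r : ι) (hT : T.IsTree) (β : ι → Set V)
    (hD : IsTreeDecompOn B Set.univ T β) :
    IsTreeDecompOn (halfSquare B W) W T (derivedBag B W U T r β) := by
  classical
  obtain ⟨hWU, hdisj, hadjWU⟩ := hbip
  constructor
  · -- covers
    intro v hv
    obtain ⟨t, ht⟩ := hD.covers v trivial
    exact ⟨t, Or.inl ⟨ht, hv⟩⟩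
  · -- edge_mem
    rintro a b ⟨hne, haW, hbW, s, has, hbs⟩
    have hsU : s ∈ U := by
      rcases hadjWU has with ⟨_, h⟩ | ⟨h, _⟩
      · exact h
      · exact absurd ⟨haW, h⟩ (hdisj a)
    have hconn : (T.induce {t | s ∈ β t}).Connected := hD.conn s trivial
    have hne' : {t | s ∈ β t}.Nonempty := hD.covers s trivial
    obtain ⟨t, htS, htop⟩ := exists_top (r := r) hT hconn hne'
    obtain ⟨t₁, ha1, hs1⟩ := hD.edge_mem has
    obtain ⟨t₂, hb2, hs2⟩ := hD.edge_mem hbs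
    refine ⟨t, Or.inr ?_, Or.inr ?_⟩
    · exact Set.mem_biUnion ⟨htS, hsU⟩ ⟨has.symm, mem_gamma_of_desc (htop t₁ hs1) ha1⟩
    · exact Set.mem_biUnion ⟨htS, hsU⟩ ⟨hbs.symm, mem_gamma_of_desc (htop t₂ hs2) hb2⟩
  · -- connectivity
    intro v hvW
    set X := {t | v ∈ derivedBag B W U T r β t} with hX
    have hTvX : ∀ t, v ∈ β t → t ∈ X := fun t ht => Or.inl ⟨ht, hvW⟩
    obtain ⟨t₀, ht₀⟩ := hD.covers v trivial
    -- each node of X reaches a node of T_v within X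
    have main : ∀ t (ht : t ∈ X), ∃ u, ∃ hu : v ∈ β u,
        (T.induce X).Reachable ⟨t, ht⟩ ⟨u, hTvX u hu⟩ := by
      intro t ht
      have ht' : t ∈ X := ht
      rw [hX, Set.mem_setOf_eq, derivedBag] at ht'
      rcases ht' with ⟨htβ, _⟩ | hmem
      · exact ⟨t, htβ, Reachable.refl _⟩
      · simp only [Set.mem_iUnion, Set.mem_inter_iff, mem_neighborSet] at hmem
        obtain ⟨s, ⟨hsβ, hsU⟩, hvs, hvγ⟩ := hmem
        obtain ⟨tsv, hs_tsv, hv_tsv⟩ := hD.edge_mem hvs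
        have hconnS : (T.induce {u | s ∈ β u}).Connected := hD.conn s trivial
        obtain ⟨w, hwS⟩ := exists_walk_of_induce_reachable
          (hconnS.preconnected ⟨t, hsβ⟩ ⟨tsv, hs_tsv⟩)
        have hq : w.bypass.IsPath := w.bypass_isPath
        have hqS : ∀ x ∈ w.bypass.support, x ∈ {u | s ∈ β u} :=
          fun x hx => hwS x (w.support_bypass_subset hx)
        obtain ⟨pt, hpt⟩ := (hT.existsUnique_path t r).exists
        obtain ⟨ptsv, hptsv⟩ := (hT.existsUnique_path tsv r).exists
        have hsub : ∀ u ∈ w.bypass.support, u ∈ X := by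
          intro u hu
          have hvγu : v ∈ gammaSet T r β u := by
            rcases support_subset_of_tree hT pt ptsv hq u hu with h | h
            · exact gamma_mono ((desc_iff hT hpt).2 h) hvγ
            · exact mem_gamma_of_desc ((desc_iff hT hptsv).2 h) hv_tsv
          rw [hX, Set.mem_setOf_eq, derivedBag]
          right
          exact Set.mem_biUnion ⟨hqS u hu, hsU⟩ ⟨hvs, hvγu⟩
        refine ⟨tsv, hv_tsv, ?_⟩
        have := reachable_induce_of_walk w.bypass hsub ht
          (hsub tsv w.bypass.end_mem_support)
        exact this
    rw [connected_iff]
    refine ⟨?_, ⟨⟨t₀, hTvX t₀ ht₀⟩⟩⟩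
    intro x y
    obtain ⟨t, htX⟩ := x
    obtain ⟨t', ht'X⟩ := y
    obtain ⟨u, hu, hr1⟩ := main t htX
    obtain ⟨u', hu', hr2⟩ := main t' ht'X
    have hconnV : (T.induce {s | v ∈ β s}).Connected := hD.conn v trivial
    obtain ⟨w, hwV⟩ := exists_walk_of_induce_reachable
      (hconnV.preconnected ⟨u, hu⟩ ⟨u', hu'⟩)
    have hwX : ∀ x ∈ w.support, x ∈ X := fun x hx => hTvX x (hwV x hx)
    have hr3 := reachable_induce_of_walk w hwX (hTvX u hu) (hTvX u' hu')
    exact (hr1.trans hr3).trans hr2.symm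
end

section
/- Let B be a simple bipartite graph with bipartition V(B) = W ⊎ U, G its half-square, D = (T, β_D) a nice tree decomposition of B, and D' = (T, β_{D'}) the derived decomposition of G. Let s ∈ U and K = N_B(s) be the corresponding special clique of G. Then there exists a linear ordering x_1, …, x_m of the vertices of K such that for every node t of T there is a (possibly empty) set I of consecutive elements of this ordering with Fake(t) ∩ K ⊆ I and I ∩ (K ∖ γ_{D'}(t)) = ∅. -/
open SimpleGraph

section Aux

attribute [local instance 10] Classical.propDecidable

open SimpleGraph Walk

variable {ι : Type*} {T : SimpleGraph ι}

/-- The unique path between two vertices of a tree. -/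
noncomputable def thePath (hT : T.IsTree) (u v : ι) : T.Walk u v :=
  ((SimpleGraph.isTree_iff_existsUnique_path.mp hT).2 u v).exists.choose

lemma thePath_isPath (hT : T.IsTree) (u v : ι) : (thePath hT u v).IsPath :=
  ((SimpleGraph.isTree_iff_existsUnique_path.mp hT).2 u v).exists.choose_spec

lemma eq_thePath (hT : T.IsTree) {u v : ι} (p : T.Walk u v) (hp : p.IsPath) :
    p = thePath hT u v :=
  ((SimpleGraph.isTree_iff_existsUnique_path.mp hT).2 u v).unique hp (thePath_isPath hT u v)

lemma desc_iff_mem (hT : T.IsTree) (r t u : ι) :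
    Desc T r t u ↔ t ∈ (thePath hT u r).support := by
  constructor
  · intro h; exact h _ (thePath_isPath hT u r)
  · intro h p hp; rwa [eq_thePath hT p hp]

lemma mySupport_concat {u v : ι} (w : T.Walk u v) :
    ∃ L, w.support = L ++ [v] := by
  have h1 : w.reverse.support = v :: w.reverse.support.tail := Walk.support_eq_cons _
  have h2 : w.support.reverse = v :: w.reverse.support.tail := by
    rw [← Walk.support_reverse]; exact h1
  refine ⟨w.reverse.support.tail.reverse, ?_⟩
  have h3 := congrArg List.reverse h2
  rw [List.reverse_reverse] at h3
  rw [h3, List.reverse_cons]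

lemma suffix_of_desc (hT : T.IsTree) {r t u : ι} (h : Desc T r t u) :
    (thePath hT t r).support <:+ (thePath hT u r).support := by
  have ht : t ∈ (thePath hT u r).support := (desc_iff_mem hT r t u).mp h
  have hdrop : ((thePath hT u r).dropUntil t ht).IsPath :=
    (thePath_isPath hT u r).dropUntil ht
  have heq : thePath hT t r = (thePath hT u r).dropUntil t ht :=
    (eq_thePath hT _ hdrop).symm
  rw [heq]
  obtain ⟨L, hL⟩ := mySupport_concat ((thePath hT u r).takeUntil t ht)
  have hthis : (thePath hT u r).support =
      ((thePath hT u r).takeUntil t ht).support ++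
        ((thePath hT u r).dropUntil t ht).support.tail := by
    rw [← Walk.support_append, (thePath hT u r).take_spec ht]
  rw [hL] at hthis
  refine ⟨L, ?_⟩
  rw [hthis, List.append_assoc, List.singleton_append, ← Walk.support_eq_cons]

lemma desc_of_suffix (hT : T.IsTree) {r t u : ι}
    (h : (thePath hT t r).support <:+ (thePath hT u r).support) : Desc T r t u := by
  rw [desc_iff_mem hT]
  exact h.subset (thePath hT t r).start_mem_support

lemma step_suffix (hT : T.IsTree) {r t u v : ι} (h : T.Adj u v)
    (hu : u ≠ t) (hv : v ≠ t)
    (hsuf : (thePath hT t r).support <:+ (thePath hT v r).support) :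
    (thePath hT t r).support <:+ (thePath hT u r).support := by
  by_cases hmem : u ∈ (thePath hT v r).support
  · have htake : ((thePath hT v r).takeUntil u hmem).IsPath :=
      (thePath_isPath hT v r).takeUntil hmem
    have huniq := hT.IsAcyclic.path_unique
      (⟨((thePath hT v r).takeUntil u hmem).reverse, htake.reverse⟩ : T.Path u v)
      (SimpleGraph.Path.singleton h)
    have hval : ((thePath hT v r).takeUntil u hmem).reverse = Walk.cons h Walk.nil :=
      congrArg Subtype.val huniq
    have h5 : ((thePath hT v r).takeUntil u hmem).support.reverse = [u, v] := by
      rw [← Walk.support_reverse, hval]; simp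
    have hsupp_take : ((thePath hT v r).takeUntil u hmem).support = [v, u] := by
      have h6 := congrArg List.reverse h5
      simpa using h6
    have hdecomp : (thePath hT v r).support =
        ((thePath hT v r).takeUntil u hmem).support ++
          ((thePath hT v r).dropUntil u hmem).support.tail := by
      rw [← Walk.support_append, (thePath hT v r).take_spec hmem]
    rw [hsupp_take] at hdecomp
    have hdrop : ((thePath hT v r).dropUntil u hmem).IsPath :=
      (thePath_isPath hT v r).dropUntil hmem
    have hq : thePath hT u r = (thePath hT v r).dropUntil u hmem :=
      (eq_thePath hT _ hdrop).symm
    have h2 : (thePath hT v r).support = v :: ((thePath hT v r).dropUntil u hmem).support := by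
      conv_rhs => rw [Walk.support_eq_cons ((thePath hT v r).dropUntil u hmem)]
      exact hdecomp
    rw [hq]
    have hsuf' := hsuf
    rw [h2] at hsuf'
    rcases List.suffix_cons_iff.mp hsuf' with heq | ht2
    · exfalso
      have h3 : t :: (thePath hT t r).support.tail =
          v :: ((thePath hT v r).dropUntil u hmem).support := by
        rw [← Walk.support_eq_cons]; exact heq
      injection h3 with h4 _
      exact hv h4.symm
    · exact ht2
  · have hpath : (Walk.cons h (thePath hT v r)).IsPath :=
      (thePath_isPath hT v r).cons hmem
    have hq : thePath hT u r = Walk.cons h (thePath hT v r) :=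
      (eq_thePath hT _ hpath).symm
    rw [hq, Walk.support_cons]
    exact hsuf.trans (List.suffix_cons u _)

lemma walk_suffix (hT : T.IsTree) {r t : ι} {S : Set ι} (htS : t ∉ S) :
    ∀ {u u' : ι} (w : T.Walk u u'),
      (thePath hT t r).support <:+ (thePath hT u' r).support →
      (∀ z ∈ w.support, z ∈ S) →
      (thePath hT t r).support <:+ (thePath hT u r).support := by
  intro u u' w
  induction w with
  | nil => exact fun hb _ => hb
  | @cons a b c hadj w' ih =>
      intro hb hz
      have haS : a ∈ S := hz a (Walk.start_mem_support _)
      have hbS : b ∈ S := hz b (by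
        rw [Walk.support_cons]
        exact List.mem_cons_of_mem a w'.start_mem_support)
      refine step_suffix hT hadj (fun hh => htS (hh ▸ haS)) (fun hh => htS (hh ▸ hbS))
        (ih hb (fun z hzz => hz z ?_))
      rw [Walk.support_cons]
      exact List.mem_cons_of_mem a hzz

lemma desc_of_connected (hT : T.IsTree) {r t : ι} {S : Set ι}
    (hconn : (T.induce S).Connected) (htS : t ∉ S) {t₁ : ι} (ht₁ : t₁ ∈ S)
    (hdesc : Desc T r t t₁) : ∀ u ∈ S, Desc T r t u := by
  intro u hu
  obtain ⟨w₀⟩ := hconn.preconnected ⟨u, hu⟩ ⟨t₁, ht₁⟩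
  have hzS : ∀ z ∈ (w₀.map (SimpleGraph.Embedding.induce S).toHom).support, z ∈ S := by
    intro z hz
    rw [Walk.support_map] at hz
    obtain ⟨z', _, rfl⟩ := List.mem_map.mp hz
    exact z'.2
  exact desc_of_suffix hT
    (walk_suffix hT htS (w₀.map (SimpleGraph.Embedding.induce S).toHom)
      (suffix_of_desc hT hdesc) hzS)

lemma lex_prefix_convex {α : Type*} {lt : α → α → Prop}
    (tricho : ∀ a b, lt a b ∨ a = b ∨ lt b a) :
    ∀ (p l₁ l₂ l₃ : List α), p <+: l₁ → p <+: l₃ →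
      ¬ List.Lex lt l₂ l₁ → ¬ List.Lex lt l₃ l₂ → p <+: l₂ := by
  intro p
  induction p with
  | nil => intro l₁ l₂ l₃ _ _ _ _; simp
  | cons a p' ih =>
      intro l₁ l₂ l₃ h1 h3 h12 h23
      obtain ⟨s₁, rfl⟩ := h1
      obtain ⟨s₃, rfl⟩ := h3
      rw [List.cons_append] at h12 h23
      cases l₂ with
      | nil => exact absurd List.Lex.nil h12
      | cons b t₂ =>
          rcases tricho a b with hab | rfl | hba
          · exact absurd (List.Lex.rel hab) h23
          · refine List.cons_prefix_cons.mpr ⟨rfl, ?_⟩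
            exact ih (p' ++ s₁) t₂ (p' ++ s₃) (List.prefix_append _ _)
              (List.prefix_append _ _)
              (fun hh => h12 (List.Lex.cons hh)) (fun hh => h23 (List.Lex.cons hh))
          · exact absurd (List.Lex.rel hba) h12

end Aux

/-- for each special clique `K = N_B(s)` there is a linear
ordering of `K` such that for every node `t` some set of consecutive elements
contains `Fake(t) ∩ K` and avoids `K ∖ γ_{D'}(t)`. -/
theorem stmt_8 {V : Type*} {ι : Type*} [Fintype V] (B : SimpleGraph V) (W U : Set V)
    (hbip : IsBipartition B W U)
    (T : SimpleGraph ι) (r : ι) (hT : T.IsTree) (β : ι → Set V)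
    (hD : IsTreeDecompOn B Set.univ T β) (hnice : IsNice T r β)
    (s₀ : V) (hs₀ : s₀ ∈ U) :
    ∃ (m : ℕ) (x : Fin m → V), Function.Injective x ∧
      Set.range x = B.neighborSet s₀ ∧
      ∀ t : ι, ∃ lo hi : ℕ,
        fakeSet B W U T r β t ∩ B.neighborSet s₀
            ⊆ x '' {i | lo ≤ (i : ℕ) ∧ (i : ℕ) < hi} ∧
        (x '' {i | lo ≤ (i : ℕ) ∧ (i : ℕ) < hi}) ∩
            (B.neighborSet s₀ \ gammaSet T r (derivedBag B W U T r β) t) = ∅ := by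
  classical
  have hKW : ∀ a ∈ B.neighborSet s₀, a ∈ W := by
    intro a ha
    rcases hbip.2.2 ha with ⟨hs, _⟩ | ⟨_, hw⟩
    · exact absurd ⟨hs, hs₀⟩ (hbip.2.1 s₀)
    · exact hw
  have hcov : ∀ a : V, ∃ u, a ∈ β u := fun a => hD.covers a (Set.mem_univ a)
  let f : V → ι := fun a => (hcov a).choose
  have hf : ∀ a, a ∈ β (f a) := fun a => (hcov a).choose_spec
  letI : LinearOrder ι := IsWellOrder.linearOrder WellOrderingRel
  letI : LinearOrder V := IsWellOrder.linearOrder WellOrderingRel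
  let κ : ι → List ι := fun u => (thePath hT u r).support.reverse
  have hdp : ∀ t u : ι, Desc T r t u ↔ κ t <+: κ u := by
    intro t u
    constructor
    · intro h; exact List.reverse_prefix.mpr (suffix_of_desc hT h)
    · intro h; exact desc_of_suffix hT (List.reverse_prefix.mp h)
  let Kf : Finset V := (Set.toFinite (B.neighborSet s₀)).toFinset
  let enc : V → (List ι ×ₗ V) := fun a => toLex (κ (f a), a)
  let Khat : Finset (List ι ×ₗ V) := Kf.image enc
  let e := Khat.orderIsoOfFin rfl
  let x : Fin Khat.card → V := fun i => (ofLex ((e i : List ι ×ₗ V))).2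
  have hx : ∀ i, x i ∈ B.neighborSet s₀ ∧ (e i : List ι ×ₗ V) = enc (x i) := by
    intro i
    obtain ⟨a, haK, hae⟩ := Finset.mem_image.mp (e i).2
    have hxa : x i = a := by
      show (ofLex ((e i : List ι ×ₗ V))).2 = a
      rw [← hae]; rfl
    constructor
    · rw [hxa]; exact (Set.Finite.mem_toFinset _).mp haK
    · rw [hxa, ← hae]
  have hxinj : Function.Injective x := by
    intro i j hij
    have h1 := (hx i).2
    have h2 := (hx j).2
    have h3 : (e i : List ι ×ₗ V) = (e j : List ι ×ₗ V) := by
      rw [h1, h2, hij]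
    exact e.injective (Subtype.ext h3)
  have hxrange : Set.range x = B.neighborSet s₀ := by
    ext a
    constructor
    · rintro ⟨i, rfl⟩; exact (hx i).1
    · intro ha
      have hmem : enc a ∈ Khat :=
        Finset.mem_image_of_mem enc ((Set.Finite.mem_toFinset _).mpr ha)
      obtain ⟨i, hi⟩ := e.surjective ⟨enc a, hmem⟩
      refine ⟨i, ?_⟩
      show (ofLex ((e i : List ι ×ₗ V))).2 = a
      rw [show (e i : List ι ×ₗ V) = enc a from congrArg Subtype.val hi]; rfl
  have hmono : ∀ i j : Fin Khat.card, i ≤ j →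
      ¬ List.Lex (· < ·) (κ (f (x j))) (κ (f (x i))) := by
    intro i j hij hlex
    have hle : (e i : List ι ×ₗ V) ≤ (e j : List ι ×ₗ V) :=
      Subtype.coe_le_coe.mpr (e.monotone hij)
    rw [(hx i).2, (hx j).2] at hle
    have hlt : κ (f (x j)) < κ (f (x i)) := hlex
    rcases Prod.Lex.le_iff.mp hle with h1 | ⟨h1, _⟩
    · exact lt_asymm (show κ (f (x i)) < κ (f (x j)) from h1) hlt
    · have h1' : κ (f (x i)) = κ (f (x j)) := h1
      rw [h1'] at hlt; exact lt_irrefl _ hlt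
  refine ⟨Khat.card, x, hxinj, hxrange, ?_⟩
  intro t
  by_cases hFK : fakeSet B W U T r β t ∩ B.neighborSet s₀ = ∅
  · refine ⟨0, 0, ?_, ?_⟩
    · rw [hFK]; exact Set.empty_subset _
    · have hempty : {i : Fin Khat.card | 0 ≤ (i : ℕ) ∧ (i : ℕ) < 0} = ∅ := by
        ext i; simp
      rw [hempty, Set.image_empty, Set.empty_inter]
  · have hmain : ∀ a ∈ fakeSet B W U T r β t ∩ B.neighborSet s₀,
        ∀ u, a ∈ β u → Desc T r t u := by
      rintro a ⟨hafake, haK⟩ u hau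
      obtain ⟨haD, haB⟩ := hafake
      have hγ : a ∈ gammaSet T r β t := by
        rcases haD with hleft | hright
        · exact absurd hleft.1 haB
        · rw [Set.mem_iUnion₂] at hright
          obtain ⟨s, hs, hmem⟩ := hright
          exact hmem.2
      have h2 : a ∈ ⋃ t' ∈ {t' | Desc T r t t'}, β t' := hγ
      rw [Set.mem_iUnion₂] at h2
      obtain ⟨t₁, ht₁d, ht₁b⟩ := h2
      exact desc_of_connected hT (hD.conn a (Set.mem_univ a)) haB ht₁b ht₁d u hau
    obtain ⟨a₀, ha₀⟩ := Set.nonempty_iff_ne_empty.mpr hFK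
    let J : Finset (Fin Khat.card) := Finset.univ.filter (fun i => Desc T r t (f (x i)))
    have hJmem : ∀ i, i ∈ J ↔ Desc T r t (f (x i)) := by
      intro i; simp [J]
    obtain ⟨i₀, hxi₀⟩ : ∃ i, x i = a₀ := by
      have : a₀ ∈ Set.range x := by rw [hxrange]; exact ha₀.2
      exact this
    have hi₀J : i₀ ∈ J := by
      rw [hJmem i₀]
      exact hmain (x i₀) (hxi₀ ▸ ha₀) (f (x i₀)) (hf (x i₀))
    have hJne : J.Nonempty := ⟨i₀, hi₀J⟩
    refine ⟨(J.min' hJne : ℕ), (J.max' hJne : ℕ) + 1, ?_, ?_⟩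
    · rintro a ⟨hf1, hf2⟩
      obtain ⟨i, rfl⟩ : ∃ i, x i = a := by
        have : a ∈ Set.range x := by rw [hxrange]; exact hf2
        exact this
      have hiJ : i ∈ J := (hJmem i).mpr (hmain _ ⟨hf1, hf2⟩ (f (x i)) (hf (x i)))
      exact ⟨i, ⟨J.min'_le i hiJ, Nat.lt_succ_of_le (J.le_max' i hiJ)⟩, rfl⟩
    · rw [Set.eq_empty_iff_forall_notMem]
      rintro y ⟨⟨i, ⟨hlo, hhi⟩, rfl⟩, hyK, hyγ⟩
      apply hyγ
      have hjlo : J.min' hJne ≤ i := by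
        rw [Fin.le_def]; exact hlo
      have hjhi : i ≤ J.max' hJne := by
        rw [Fin.le_def]; exact Nat.lt_succ_iff.mp hhi
      have hd1 : Desc T r t (f (x (J.min' hJne))) := (hJmem _).mp (J.min'_mem hJne)
      have hd2 : Desc T r t (f (x (J.max' hJne))) := (hJmem _).mp (J.max'_mem hJne)
      have hconvex : κ t <+: κ (f (x i)) :=
        lex_prefix_convex (fun a b => lt_trichotomy a b) _ _ _ _
          ((hdp _ _).mp hd1) ((hdp _ _).mp hd2)
          (hmono _ _ hjlo) (hmono _ _ hjhi)
      have hdi : Desc T r t (f (x i)) := (hdp _ _).mpr hconvex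
      exact Set.mem_biUnion hdi
        (Set.mem_union_left _ (Set.mem_inter (hf (x i)) (hKW _ (hx i).1)))
end

section
/- Let A_1, …, A_q be finite sets, each of size 1 or 2, such that at most one of them has size 1 and every element lies in at most two of the sets A_1, …, A_q. Then {A_1, …, A_q} has a system of distinct representatives; that is, there exist pairwise distinct elements a_1, …, a_q with a_i ∈ A_i for every i ∈ {1, …, q}. -/
open SimpleGraph

/-- a collection of sets, each of size 1 or 2, with at most one
set of size 1 and every element appearing in at most two of the sets, has a
system of distinct representatives. -/
theorem stmt_12 {α : Type*} [DecidableEq α] (q : ℕ) (A : Fin q → Finset α)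
    (hcard : ∀ i, (A i).card = 1 ∨ (A i).card = 2)
    (hone : ∀ i j, (A i).card = 1 → (A j).card = 1 → i = j)
    (htwo : ∀ x : α, ({i | x ∈ A i} : Set (Fin q)).ncard ≤ 2) :
    ∃ a : Fin q → α, Function.Injective a ∧ ∀ i, a i ∈ A i := by
  classical
  rw [← Finset.all_card_le_biUnion_card_iff_exists_injective]
  intro s
  set B := s.biUnion A with hB
  -- double counting
  have key : ∑ i ∈ s, (A i).card = ∑ x ∈ B, (s.filter (fun i => x ∈ A i)).card := by
    have h1 : ∀ i ∈ s, (A i).card = (B.filter (fun x => x ∈ A i)).card := by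
      intro i hi
      congr 1
      ext x
      simp only [Finset.mem_filter, hB, Finset.mem_biUnion]
      exact ⟨fun hx => ⟨⟨i, hi, hx⟩, hx⟩, fun ⟨_, hx⟩ => hx⟩
    rw [Finset.sum_congr rfl h1]
    simp only [Finset.card_filter]
    exact Finset.sum_comm
  -- upper bound: each element in at most 2 sets
  have hub : ∑ i ∈ s, (A i).card ≤ 2 * B.card := by
    rw [key]
    calc ∑ x ∈ B, (s.filter (fun i => x ∈ A i)).card
        ≤ ∑ _x ∈ B, 2 := by
          refine Finset.sum_le_sum fun x _ => ?_
          have h2 := htwo x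
          have : ({i | x ∈ A i} : Set (Fin q)).ncard =
              (Finset.univ.filter (fun i => x ∈ A i)).card := by
            rw [Set.ncard_eq_toFinset_card']
            congr 1
            ext i
            simp
          rw [this] at h2
          exact le_trans (Finset.card_le_card (Finset.filter_subset_filter _
            (Finset.subset_univ s))) h2
      _ = 2 * B.card := by rw [Finset.sum_const, smul_eq_mul, mul_comm]
  -- lower bound: at most one singleton
  have hs1card : (s.filter (fun i => (A i).card = 1)).card ≤ 1 := by
    rw [Finset.card_le_one]
    intro i hi j hj
    exact hone i j (Finset.mem_filter.mp hi).2 (Finset.mem_filter.mp hj).2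
  have hsplit := Finset.sum_filter_add_sum_filter_not s (fun i => (A i).card = 1)
    (fun i => (A i).card)
  have e1 : ∑ i ∈ s.filter (fun i => (A i).card = 1), (A i).card =
      (s.filter (fun i => (A i).card = 1)).card := by
    rw [Finset.card_eq_sum_ones]
    exact Finset.sum_congr rfl fun i hi => (Finset.mem_filter.mp hi).2
  have e2 : ∑ i ∈ s.filter (fun i => ¬ (A i).card = 1), (A i).card =
      2 * (s.filter (fun i => ¬ (A i).card = 1)).card := by
    rw [Finset.card_eq_sum_ones, Finset.mul_sum]
    refine Finset.sum_congr rfl fun i hi => ?_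
    have := (Finset.mem_filter.mp hi).2
    rcases hcard i with h | h
    · exact absurd h this
    · omega
  have hc := Finset.card_filter_add_card_filter_not
    (s := s) (p := fun i => (A i).card = 1)
  omega
end
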